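/- Let X be a regular scheme with a regular weighted center J, B → X the full cobordant blow-up, I ⊆ O_X an ideal sheaf, and σ^s(I) = {t^a f ∈ O_B : f ∈ O_B · I, a ≥ 0} the strict transform of I. Then under the natural isomorphism O_B/(t^{-1}) ≅ gr_J(O_X), the restriction σ^s(I)|_{V(t^{-1})} corresponds to the ideal of initial forms in(I) = ⊕_a ((I ∩ (J^a)_X) + (J^{a+1})_X)/(J^{a+1})_X · t^a. -/

import Mathlib

open LaurentPolynomial DirectSum

/-- `u` is part of a regular system of parameters of the (regular) local ring `R`. -/
def IsPartialRegSystemOfParams {R : Type*} [CommRing R] [IsLocalRing R] {k : ℕ}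
    (u : Fin k → R) : Prop :=
  ∃ (n : ℕ) (v : Fin n → R) (e : Fin k ↪ Fin n),
    (∀ i, v (e i) = u i) ∧
    Ideal.span (Set.range v) = IsLocalRing.maximalIdeal R ∧
    ringKrullDim R = n

/-- The ideal of sections `(J^a)_X` of the `a`-th power of the weighted center `J`. -/
def sectionsPow {R : Type*} [CommRing R] {k : ℕ} (u : Fin k → R) (w : Fin k → ℕ)
    (a : ℕ) : Ideal R :=
  Ideal.span {y | ∃ c : Fin k → ℕ, a ≤ ∑ i, c i * w i ∧ y = ∏ i, u i ^ c i}

/-- The coordinate ring `O_B = O_X[t⁻¹, u₁ t^{w₁},…,u_k t^{w_k}]` of the full cobordant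
blow-up. -/
noncomputable def cobordantAlgebra {R : Type*} [CommRing R] {k : ℕ}
    (u : Fin k → R) (w : Fin k → ℕ) : Subalgebra R (LaurentPolynomial R) :=
  Algebra.adjoin R (insert (T (-1)) (Set.range fun i => C (u i) * T (w i)))

/-- The strict transform `σˢ(I) = {tᵃ·f ∈ O_B : f ∈ O_B·I, a ≥ 0}` of an ideal `I ⊆ O_X`
under the full cobordant blow-up. -/
noncomputable def strictTransform {R : Type*} [CommRing R] {k : ℕ}
    (u : Fin k → R) (w : Fin k → ℕ) (I : Ideal R) : Ideal (cobordantAlgebra u w) :=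
  Ideal.span {x : cobordantAlgebra u w | ∃ (a : ℕ) (y : cobordantAlgebra u w),
    y ∈ Ideal.span {z : cobordantAlgebra u w | ∃ g ∈ I, (z : LaurentPolynomial R) = C g} ∧
    (x : LaurentPolynomial R) = T (a : ℤ) * (y : LaurentPolynomial R)}

set_option maxHeartbeats 1000000
set_option synthInstance.maxHeartbeats 1000000

section Aux

variable {R : Type*} [CommRing R] {k : ℕ} (u : Fin k → R) (w : Fin k → ℕ)

theorem aux_sectionsPow_mono {a b : ℕ} (h : b ≤ a) :
    sectionsPow u w a ≤ sectionsPow u w b :=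
  Ideal.span_mono fun y hy => by obtain ⟨c, hc, hy⟩ := hy; exact ⟨c, h.trans hc, hy⟩

theorem aux_sectionsPow_zero : sectionsPow u w 0 = ⊤ := by
  rw [Ideal.eq_top_iff_one]
  exact Ideal.subset_span ⟨fun _ => 0, by simp, by simp⟩

theorem aux_nonpos_top {a : ℤ} (h : a ≤ 0) (x : R) : x ∈ sectionsPow u w a.toNat := by
  rw [Int.toNat_of_nonpos h, aux_sectionsPow_zero]; trivial

theorem aux_mul_mem {a b : ℕ} {x y : R} (hx : x ∈ sectionsPow u w a)
    (hy : y ∈ sectionsPow u w b) : x * y ∈ sectionsPow u w (a + b) := by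
  have h := Ideal.mul_mem_mul hx hy
  rw [sectionsPow, sectionsPow, Ideal.span_mul_span'] at h
  refine Ideal.span_le.mpr ?_ h
  rintro _ ⟨_, ⟨c, hc, rfl⟩, _, ⟨c', hc', rfl⟩, rfl⟩
  refine Ideal.subset_span ⟨c + c', ?_, ?_⟩
  · simpa [add_mul, Finset.sum_add_distrib] using Nat.add_le_add hc hc'
  · simp [pow_add, Finset.prod_mul_distrib]

theorem aux_mul_coeff {A B S : ℤ → Ideal R} (f g : LaurentPolynomial R)
    (hf : ∀ b, f.coeff b ∈ A b) (hg : ∀ b, g.coeff b ∈ B b)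
    (h : ∀ (b c : ℤ) (x y : R), x ∈ A b → y ∈ B c → x * y ∈ S (b + c)) (a : ℤ) :
    (f * g).coeff a ∈ S a := by
  classical
  rw [AddMonoidAlgebra.coeff_mul]
  simp only [Finsupp.sum]
  refine Submodule.sum_mem _ fun b _ => Submodule.sum_mem _ fun c _ => ?_
  split_ifs with hbc
  · exact hbc ▸ h b c _ _ (hf b) (hg c)
  · exact zero_mem _

theorem aux_coeff_mem {x : LaurentPolynomial R} (hx : x ∈ cobordantAlgebra u w) (a : ℤ) :
    x.coeff a ∈ sectionsPow u w a.toNat := by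
  induction hx using Algebra.adjoin_induction generalizing a with
  | mem z hz =>
    rcases hz with rfl | ⟨i, rfl⟩
    · rw [T_apply]
      split_ifs with h
      · exact aux_nonpos_top u w (by omega) 1
      · exact zero_mem _
    · show (C (u i) * T ((w i : ℤ)) : LaurentPolynomial R).coeff a ∈ _
      rw [← single_eq_C_mul_T, AddMonoidAlgebra.coeff_single, Finsupp.single_apply]
      split_ifs with h
      · have : a.toNat = w i := by omega
        rw [this]
        refine Ideal.subset_span ⟨Pi.single i 1, ?_, ?_⟩
        · simp [Pi.single_apply]
        · simp [Pi.single_apply]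
      · exact zero_mem _
  | algebraMap r =>
    rw [show (algebraMap R (LaurentPolynomial R)) r = C r from rfl, C_apply]
    split_ifs with h
    · exact aux_nonpos_top u w (by omega) r
    · exact zero_mem _
  | add f g hf hg ihf ihg => exact add_mem (ihf a) (ihg a)
  | mul f g hf hg ihf ihg =>
    refine aux_mul_coeff (S := fun a => sectionsPow u w a.toNat) f g (fun b => ihf b) (fun b => ihg b) ?_ a
    intro b c x y hx hy
    exact aux_sectionsPow_mono u w (by omega) (aux_mul_mem u w hx hy)

theorem aux_T_sum {ι : Type*} (s : Finset ι) (n : ι → ℤ) :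
    (T (∑ i ∈ s, n i) : LaurentPolynomial R) = ∏ i ∈ s, T (n i) := by
  classical
  induction s using Finset.induction with
  | empty => simp
  | insert _ _ h ih => rw [Finset.sum_insert h, Finset.prod_insert h, T_add, ih]

theorem aux_prod_CT (c : Fin k → ℕ) :
    (∏ i, (C (u i) * T (w i : ℤ)) ^ c i : LaurentPolynomial R)
      = C (∏ i, u i ^ c i) * T ((∑ i, c i * w i : ℕ) : ℤ) := by
  have : ∀ i : Fin k, (C (u i) * T (w i : ℤ)) ^ c i
      = C (u i ^ c i) * T ((c i * w i : ℕ) : ℤ) := by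
    intro i
    rw [mul_pow, T_pow, map_pow]
    push_cast
    ring_nf
  rw [Finset.prod_congr rfl fun i _ => this i, Finset.prod_mul_distrib, ← map_prod,
    ← aux_T_sum]
  push_cast
  ring_nf

theorem aux_C_mem (r : R) : (C r : LaurentPolynomial R) ∈ cobordantAlgebra u w := by
  rw [C_eq_algebraMap]
  exact Subalgebra.algebraMap_mem _ r

theorem aux_CT_mem_nat (a : ℕ) (h : R) (hh : h ∈ sectionsPow u w a) :
    C h * T (a : ℤ) ∈ cobordantAlgebra u w := by
  induction hh using Submodule.span_induction with
  | mem x hx =>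
    obtain ⟨c, hc, rfl⟩ := hx
    have key : (∏ i, (C (u i) * T (w i : ℤ)) ^ c i : LaurentPolynomial R)
        ∈ cobordantAlgebra u w :=
      Subalgebra.prod_mem _ fun i _ =>
        pow_mem (Algebra.subset_adjoin (Set.mem_insert_of_mem _ (Set.mem_range_self i))) _
    have h2 : (T (-1) : LaurentPolynomial R) ^ ((∑ i, c i * w i) - a)
        ∈ cobordantAlgebra u w :=
      pow_mem (Algebra.subset_adjoin (Set.mem_insert _ _)) _
    have h3 := mul_mem key h2
    rw [aux_prod_CT, T_pow, mul_T_assoc] at h3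
    have heq : ((∑ i, c i * w i : ℕ) : ℤ) + ((((∑ i, c i * w i) - a : ℕ)) : ℤ) * (-1)
        = (a : ℤ) := by
      simp only [mul_neg_one]
      omega
    rwa [heq] at h3
  | zero => simpa using zero_mem _
  | add x y hx hy ihx ihy => rw [map_add, add_mul]; exact add_mem ihx ihy
  | smul r x hx ih =>
    rw [smul_eq_mul, map_mul, mul_assoc]
    exact mul_mem (aux_C_mem u w r) ih

theorem aux_CT_mem (h : R) (a : ℤ) (hh : h ∈ sectionsPow u w a.toNat) :
    C h * T a ∈ cobordantAlgebra u w := by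
  rcases le_or_gt 0 a with ha | ha
  · have := aux_CT_mem_nat u w a.toNat h hh
    rwa [Int.toNat_of_nonneg ha] at this
  · have hT : (T (-1) : LaurentPolynomial R) ^ (-a).toNat ∈ cobordantAlgebra u w :=
      pow_mem (Algebra.subset_adjoin (Set.mem_insert _ _)) _
    have h3 := mul_mem (aux_C_mem u w h) hT
    have heq : (C h : LaurentPolynomial R) * T (-1) ^ (-a).toNat = C h * T a := by
      rw [T_pow, show ((((-a).toNat : ℤ)) * (-1)) = a by simp only [mul_neg_one]; omega]
    rwa [heq] at h3

variable (I : Ideal R)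

theorem aux_span_I_coeff {y : cobordantAlgebra u w}
    (hy : y ∈ Ideal.span {z : cobordantAlgebra u w | ∃ g ∈ I, (z : LaurentPolynomial R) = C g})
    (b : ℤ) : (y : LaurentPolynomial R).coeff b ∈ I := by
  induction hy using Submodule.span_induction generalizing b with
  | mem z hz =>
    obtain ⟨g, hg, hz⟩ := hz
    rw [hz, C_apply]
    split_ifs
    · exact hg
    · exact zero_mem I
  | zero => simpa using zero_mem I
  | add x y hx hy ihx ihy =>
    have hc : ((x + y : cobordantAlgebra u w) : LaurentPolynomial R).coeff b
        = (x : LaurentPolynomial R).coeff b + (y : LaurentPolynomial R).coeff b := rfl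
    rw [hc]; exact add_mem (ihx b) (ihy b)
  | smul r x hx ih =>
    have hc : ((r • x : cobordantAlgebra u w) : LaurentPolynomial R)
        = (r : LaurentPolynomial R) * (x : LaurentPolynomial R) := rfl
    rw [hc]
    exact aux_mul_coeff (A := fun _ => (⊤ : Ideal R)) (B := fun _ => I) (S := fun _ => I)
      _ _ (fun _ => trivial) (fun b => ih b) (fun _ _ x' y' _ h2 => I.mul_mem_left x' h2) b

/-- The degree-wise target ideal `(I ∩ J^a) + J^{a+1}`. -/
def auxSi (a : ℤ) : Ideal R :=
  (I ⊓ sectionsPow u w a.toNat) ⊔ sectionsPow u w (a.toNat + 1)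

theorem aux_Si_mul {b c : ℤ} {x y : R} (hx : x ∈ sectionsPow u w b.toNat)
    (hy : y ∈ auxSi u w I c) : x * y ∈ auxSi u w I (b + c) := by
  obtain ⟨y₁, hy₁, y₂, hy₂, rfl⟩ := Submodule.mem_sup.mp hy
  rw [mul_add]
  refine add_mem (Submodule.mem_sup_left (Submodule.mem_inf.mpr
    ⟨I.mul_mem_left x (Submodule.mem_inf.mp hy₁).1, ?_⟩)) (Submodule.mem_sup_right ?_)
  · exact aux_sectionsPow_mono u w (by omega)
      (aux_mul_mem u w hx (Submodule.mem_inf.mp hy₁).2)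
  · exact aux_sectionsPow_mono u w (by omega) (aux_mul_mem u w hx hy₂)

/-- The ideal of elements of `O_B` all of whose coefficients lie in the appropriate
`(I ∩ J^a) + J^{a+1}`. -/
def auxM : Ideal (cobordantAlgebra u w) where
  carrier := {x | ∀ a : ℤ, (x : LaurentPolynomial R).coeff a ∈ auxSi u w I a}
  zero_mem' := fun a => by simpa using zero_mem _
  add_mem' := by
    intro x y hx hy a
    have hc : ((x + y : cobordantAlgebra u w) : LaurentPolynomial R).coeff a
        = (x : LaurentPolynomial R).coeff a + (y : LaurentPolynomial R).coeff a := rfl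
    rw [Set.mem_setOf_eq] at *
    rw [hc]
    exact add_mem (hx a) (hy a)
  smul_mem' := by
    intro c x hx a
    have hc : ((c • x : cobordantAlgebra u w) : LaurentPolynomial R)
        = (c : LaurentPolynomial R) * (x : LaurentPolynomial R) := rfl
    rw [Set.mem_setOf_eq] at *
    rw [hc]
    exact aux_mul_coeff _ _ (fun b => aux_coeff_mem u w c.2 b) (fun b => hx b)
      (fun _ _ _ _ h1 h2 => aux_Si_mul u w I h1 h2) a

theorem aux_strict_le : strictTransform u w I ≤ auxM u w I := by
  rw [strictTransform, Ideal.span_le]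
  rintro x ⟨a, y, hy, hx⟩
  intro b
  have h1 : (x : LaurentPolynomial R).coeff b ∈ I := by
    rw [hx]
    have h2 : ((T ((a:ℕ) : ℤ) * (y : LaurentPolynomial R) : LaurentPolynomial R)).coeff b
        = 1 * (y : LaurentPolynomial R).coeff (-((a:ℕ):ℤ) + b) :=
      AddMonoidAlgebra.coeff_single_mul_apply (y : LaurentPolynomial R) 1 ((a:ℕ):ℤ) b
    rw [h2, one_mul]
    exact aux_span_I_coeff u w I hy _
  exact Submodule.mem_sup_left (Submodule.mem_inf.mpr ⟨h1, aux_coeff_mem u w x.2 b⟩)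

end Aux

set_option synthInstance.maxHeartbeats 1000000 in
/-- With `B → X` the full cobordant blow-up of the regular weighted
center `J = (u₁^{1/w₁},…,u_k^{1/w_k})`, let
`e : O_B/(t⁻¹) ≅ gr_J(O_X) = ⊕_a (J^a)_X/(J^{a+1})_X` be the natural isomorphism (of
Statement 15, characterized by `h·tᵃ ↦ [h]` for `h ∈ (J^a)_X`).  Then `e` carries the
restriction `σˢ(I)|_{V(t⁻¹)}` of the strict transform of an ideal `I ⊆ O_X` onto the ideal
of initial forms `in(I) = ⊕_a ((I ∩ (J^a)_X) + (J^{a+1})_X)/(J^{a+1})_X`. -/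
theorem strict_transform_restricts_to_initial_forms
    {R : Type*} [CommRing R] [IsLocalRing R] [IsNoetherianRing R] {k : ℕ}
    (u : Fin k → R) (hu : IsPartialRegSystemOfParams u)
    (w : Fin k → ℕ) (hw : ∀ i, 0 < w i)
    (τ : cobordantAlgebra u w) (hτ : (τ : LaurentPolynomial R) = T (-1))
    (I : Ideal R)
    (e : (cobordantAlgebra u w ⧸ (Ideal.span {τ} : Ideal (cobordantAlgebra u w))) ≃ₗ[R]
        ⨁ a : ℕ, (sectionsPow u w a ⧸
          Submodule.comap (sectionsPow u w a).subtype (sectionsPow u w (a + 1))))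
    (he : ∀ (a : ℕ) (h : R) (hh : h ∈ sectionsPow u w a)
        (z : cobordantAlgebra u w) (hz : (z : LaurentPolynomial R) = C h * T a),
        e (Ideal.Quotient.mk _ z) =
          DirectSum.of (fun a => (sectionsPow u w a ⧸
            Submodule.comap (sectionsPow u w a).subtype (sectionsPow u w (a + 1)))) a
            (Submodule.Quotient.mk ⟨h, hh⟩)) :
    Submodule.map
        (e.toLinearMap ∘ₗ
          (Ideal.Quotient.mkₐ R (Ideal.span {τ} : Ideal (cobordantAlgebra u w))).toLinearMap)
        (Submodule.restrictScalars R (strictTransform u w I)) =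
      ⨆ a : ℕ,
        Submodule.map
          (DirectSum.lof R ℕ (fun a => (sectionsPow u w a ⧸
            Submodule.comap (sectionsPow u w a).subtype (sectionsPow u w (a + 1)))) a)
          (Submodule.map
            (Submodule.mkQ (Submodule.comap (sectionsPow u w a).subtype
              (sectionsPow u w (a + 1))))
            (Submodule.comap (sectionsPow u w a).subtype
              (Submodule.restrictScalars R (I ⊓ sectionsPow u w a)))) := by
  classical
  set F := e.toLinearMap ∘ₗ
      (Ideal.Quotient.mkₐ R (Ideal.span {τ} : Ideal (cobordantAlgebra u w))).toLinearMap
    with hFdef'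
  have hFdef : ∀ z : cobordantAlgebra u w, F z = e (Ideal.Quotient.mk _ z) := fun z => rfl
  have hspan : ∀ z : cobordantAlgebra u w,
      z ∈ (Ideal.span {τ} : Ideal (cobordantAlgebra u w)) → F z = 0 := by
    intro z hz
    rw [hFdef, Ideal.Quotient.eq_zero_iff_mem.mpr hz, map_zero]
  have hCT0 : ∀ (r : R) (a : ℤ) (z : cobordantAlgebra u w),
      r ∈ sectionsPow u w (a + 1).toNat →
      (z : LaurentPolynomial R) = C r * T a → F z = 0 := by
    intro r a z hr hz
    apply hspan
    refine Ideal.mem_span_singleton'.mpr ⟨⟨C r * T (a + 1), aux_CT_mem u w r (a + 1) hr⟩, ?_⟩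
    apply Subtype.ext
    show (C r * T (a + 1) : LaurentPolynomial R) * (τ : LaurentPolynomial R)
      = (z : LaurentPolynomial R)
    rw [hτ, hz, mul_T_assoc]
    norm_num
  have hofQ : ∀ (a : ℕ) (f : R) (hfJ : f ∈ sectionsPow u w a), f ∈ I →
      DirectSum.of (fun a => (sectionsPow u w a ⧸
          Submodule.comap (sectionsPow u w a).subtype (sectionsPow u w (a + 1)))) a
        (Submodule.Quotient.mk ⟨f, hfJ⟩) ∈
      ⨆ a : ℕ,
        Submodule.map
          (DirectSum.lof R ℕ (fun a => (sectionsPow u w a ⧸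
            Submodule.comap (sectionsPow u w a).subtype (sectionsPow u w (a + 1)))) a)
          (Submodule.map
            (Submodule.mkQ (Submodule.comap (sectionsPow u w a).subtype
              (sectionsPow u w (a + 1))))
            (Submodule.comap (sectionsPow u w a).subtype
              (Submodule.restrictScalars R (I ⊓ sectionsPow u w a)))) := by
    intro a f hfJ hfI
    refine Submodule.mem_iSup_of_mem a ?_
    exact ⟨Submodule.Quotient.mk ⟨f, hfJ⟩,
      ⟨⟨f, hfJ⟩, Submodule.mem_inf.mpr ⟨hfI, hfJ⟩, rfl⟩, DirectSum.lof_eq_of R ℕ _ a _⟩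
  apply le_antisymm
  · intro ξ hξ
    obtain ⟨x, hx, rfl⟩ := hξ
    have hx' : ∀ b : ℤ, (x : LaurentPolynomial R).coeff b ∈ auxSi u w I b :=
      aux_strict_le u w I hx
    have key : ∀ (a : ℤ) (r : R) (z : cobordantAlgebra u w),
        r ∈ auxSi u w I a → (z : LaurentPolynomial R) = C r * T a → F z ∈
        ⨆ a : ℕ,
          Submodule.map
            (DirectSum.lof R ℕ (fun a => (sectionsPow u w a ⧸
              Submodule.comap (sectionsPow u w a).subtype (sectionsPow u w (a + 1)))) a)
            (Submodule.map
              (Submodule.mkQ (Submodule.comap (sectionsPow u w a).subtype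
                (sectionsPow u w (a + 1))))
              (Submodule.comap (sectionsPow u w a).subtype
                (Submodule.restrictScalars R (I ⊓ sectionsPow u w a)))) := by
      intro a r z hr hz
      rcases lt_or_ge a 0 with ha | ha
      · rw [hCT0 r a z (aux_nonpos_top u w (by omega) r) hz]
        exact zero_mem _
      · obtain ⟨f, hf, g, hg, hfg⟩ := Submodule.mem_sup.mp hr
        obtain ⟨hf1, hf2⟩ := Submodule.mem_inf.mp hf
        have hg2 : g ∈ sectionsPow u w (a + 1).toNat := by
          have h1 : (a + 1).toNat = a.toNat + 1 := by omega
          rw [h1]; exact hg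
        have hzsum : z = ⟨C f * T a, aux_CT_mem u w f a hf2⟩
            + ⟨C g * T a, aux_CT_mem u w g a
                (aux_sectionsPow_mono u w (Nat.le_succ _) hg)⟩ := by
          apply Subtype.ext
          show (z : LaurentPolynomial R) = C f * T a + C g * T a
          rw [hz, ← hfg, map_add, add_mul]
        rw [hzsum, map_add]
        refine add_mem ?_ ?_
        · have hTeq : (C f * T a : LaurentPolynomial R) = C f * T ((a.toNat : ℕ) : ℤ) := by
            rw [Int.toNat_of_nonneg ha]
          have h5 := he a.toNat f hf2 ⟨C f * T a, aux_CT_mem u w f a hf2⟩ hTeq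
          rw [hFdef, h5]
          exact hofQ a.toNat f hf2 hf1
        · rw [hCT0 g a _ hg2 rfl]
          exact zero_mem _
    have hxs : x = ∑ a ∈ (x : LaurentPolynomial R).coeff.support,
        (⟨C ((x : LaurentPolynomial R).coeff a) * T a,
          aux_CT_mem u w _ a (aux_coeff_mem u w x.2 a)⟩ : cobordantAlgebra u w) := by
      apply Subtype.ext
      rw [AddSubmonoidClass.coe_finset_sum]
      conv_lhs => rw [← AddMonoidAlgebra.sum_coeff_single (x : LaurentPolynomial R)]
      rw [Finsupp.sum]
      exact Finset.sum_congr rfl fun a _ => single_eq_C_mul_T _ _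
    rw [hxs, map_sum]
    exact Submodule.sum_mem _ fun a _ => key a _ _ (hx' a) rfl
  · refine iSup_le fun a => ?_
    rintro ξ hξ
    obtain ⟨q, hq, rfl⟩ := hξ
    obtain ⟨p, hp, rfl⟩ := hq
    obtain ⟨f, hfJ⟩ := p
    have hp' : f ∈ I ⊓ sectionsPow u w a := hp
    refine ⟨⟨C f * T (a : ℤ), aux_CT_mem_nat u w a f hfJ⟩, ?_, ?_⟩
    · show _ ∈ strictTransform u w I
      refine Ideal.subset_span ⟨a, ⟨C f, aux_C_mem u w f⟩,
        Ideal.subset_span ⟨f, (Submodule.mem_inf.mp hp').1, rfl⟩, ?_⟩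
      show (C f * T ((a:ℕ) : ℤ) : LaurentPolynomial R) = T ((a:ℕ) : ℤ) * C f
      ring
    · rw [hFdef, DirectSum.lof_eq_of, Submodule.mkQ_apply]
      exact he a f hfJ _ rfl
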